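/- Let σ₁ > 0 and σ₂ > 0. Let μ₁, μ₂ be the Gaussian probability measures on ℝ with mean 0 and variances σ₁², σ₂² respectively, and consider the product measure μ₁ ⊗ μ₂ (i.e., X ~ N(0, σ₁²) and Y ~ N(0, σ₂²) are independent). Define, for r > 0, f_R(r) = (1/(2σ₁σ₂))·exp(−r(σ₁² + σ₂²)/(4σ₁²σ₂²))·I₀(r(σ₁² − σ₂²)/(4σ₁²σ₂²)), and, for 0 < x < r, f(x ∣ r) = x^{−1/2}·(r − x)^{−1/2}·exp(−(r − x)/(2σ₂²) − x/(2σ₁²)) / (π·exp(−r(σ₁² + σ₂²)/(4σ₁²σ₂²))·I₀(r(σ₁² − σ₂²)/(4σ₁²σ₂²))). Then for every bounded measurable function g : ℝ → ℝ and every Borel set A ⊆ (0, ∞), ∫ g(x²)·𝟙_A(x² + y²) d(μ₁ ⊗ μ₂)(x, y) = ∫_{r ∈ A} ( ∫_{x ∈ (0, r)} g(x)·f(x ∣ r) dx )·f_R(r) dr. (That is, f(· ∣ r) is the conditional density of X² given X² + Y² = r.) -/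

import Mathlib

open MeasureTheory ProbabilityTheory Real Set
open scoped NNReal ENNReal

/-- Modified Bessel function of the first kind of order 0, via its integral representation. -/
noncomputable def besselI0 (z : ℝ) : ℝ := (1 / π) * ∫ θ in (0:ℝ)..π, Real.exp (z * Real.cos θ)


lemma sq_image_Ioi : (fun x : ℝ => x ^ 2) '' Set.Ioi 0 = Set.Ioi 0 := by
  ext u
  constructor
  · rintro ⟨x, hx, rfl⟩; exact pow_pos (show (0:ℝ) < x from hx) 2
  · intro hu; exact ⟨Real.sqrt u, Real.sqrt_pos.2 hu, (Real.sq_sqrt hu.le)⟩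

lemma sq_injOn_Ioi : Set.InjOn (fun x : ℝ => x ^ 2) (Set.Ioi 0) := by
  intro a ha b hb hab
  have := congrArg Real.sqrt hab
  rwa [Real.sqrt_sq (le_of_lt ha), Real.sqrt_sq (le_of_lt hb)] at this

lemma key_subst (h : ℝ → ℝ) :
    ∫ u in Set.Ioi (0:ℝ), h u = ∫ x in Set.Ioi (0:ℝ), |2 * x| • h (x ^ 2) := by
  nth_rewrite 1 [← sq_image_Ioi]
  exact integral_image_eq_integral_abs_deriv_smul measurableSet_Ioi
    (fun x _ => by simpa using (hasDerivAt_pow 2 x).hasDerivWithinAt) sq_injOn_Ioi h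

lemma key_subst_int (h : ℝ → ℝ) :
    IntegrableOn h (Set.Ioi (0:ℝ)) ↔
      IntegrableOn (fun x => |2 * x| • h (x ^ 2)) (Set.Ioi (0:ℝ)) := by
  nth_rewrite 1 [← sq_image_Ioi]
  exact integrableOn_image_iff_integrableOn_abs_deriv_smul measurableSet_Ioi
    (fun x _ => by simpa using (hasDerivAt_pow 2 x).hasDerivWithinAt) sq_injOn_Ioi h

lemma gauss_int (v : ℝ≥0) (hv : v ≠ 0) (h : ℝ → ℝ) :
    ∫ x, h x ∂(gaussianReal 0 v) = ∫ x, gaussianPDFReal 0 v x * h x := by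
  rw [gaussianReal_of_var_ne_zero _ hv]
  have : (gaussianPDF 0 v) = fun x => ((Real.toNNReal (gaussianPDFReal 0 v x) : ℝ≥0) : ℝ≥0∞) := by
    ext x; simp [gaussianPDF, ENNReal.ofReal]
  rw [this, integral_withDensity_eq_integral_smul
    ((measurable_gaussianPDFReal 0 v).real_toNNReal) h]
  congr 1
  ext x
  rw [NNReal.smul_def, Real.coe_toNNReal _ (gaussianPDFReal_nonneg 0 v x), smul_eq_mul]

lemma key (σ : ℝ) (hσ : 0 < σ) (h : ℝ → ℝ) :
    ∫ x, h (x ^ 2) ∂(gaussianReal 0 ⟨σ ^ 2, sq_nonneg σ⟩) =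
    ∫ u in Set.Ioi (0:ℝ),
      h u * (Real.exp (-u / (2 * σ ^ 2)) / (Real.sqrt (2 * π) * σ * Real.sqrt u)) := by
  have hπ := Real.pi_pos
  have hv : (⟨σ ^ 2, sq_nonneg σ⟩ : ℝ≥0) ≠ 0 := by
    intro hc
    have := congrArg (fun x : ℝ≥0 => (x : ℝ)) hc
    change σ ^ 2 = (0:ℝ) at this
    nlinarith
  rw [gauss_int _ hv (fun x => h (x ^ 2)), key_subst]
  rw [show (fun x : ℝ => gaussianPDFReal 0 ⟨σ ^ 2, sq_nonneg σ⟩ x * h (x ^ 2))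
      = (fun x : ℝ => gaussianPDFReal 0 ⟨σ ^ 2, sq_nonneg σ⟩ |x| * h (|x| ^ 2)) from by
        ext x
        rw [sq_abs]
        congr 1
        simp [gaussianPDFReal, sq_abs],
     integral_comp_abs (f := fun t => gaussianPDFReal 0 ⟨σ ^ 2, sq_nonneg σ⟩ t * h (t ^ 2)), ← MeasureTheory.integral_const_mul]
  refine setIntegral_congr_fun measurableSet_Ioi (fun x hx => ?_)
  have hx0 : (0:ℝ) < x := hx
  have hs : Real.sqrt (x ^ 2) = x := by
    rw [Real.sqrt_sq hx0.le]
  have h2π : Real.sqrt (2 * π * (σ ^ 2)) = Real.sqrt (2 * π) * σ := by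
    rw [Real.sqrt_mul (by positivity), Real.sqrt_sq hσ.le]
  have hsqpos : (0:ℝ) < Real.sqrt (2 * π) := Real.sqrt_pos.2 (by positivity)
  have hcoe : NNReal.toReal (Subtype.mk (σ ^ 2) (sq_nonneg σ)) = σ ^ 2 := rfl
  simp only [gaussianPDFReal, hcoe, NNReal.coe_mk, smul_eq_mul, hs, abs_of_pos (by linarith : (0:ℝ) < 2 * x)]
  rw [h2π]
  have : (-(x - 0) ^ 2 / (2 * (σ^2))) = (-(x^2) / (2 * σ ^ 2)) := by ring
  rw [this]
  field_simp


lemma besselI0_pos (z : ℝ) : 0 < besselI0 z := by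
  unfold besselI0
  have h1 : 0 < ∫ θ in (0:ℝ)..π, Real.exp (z * Real.cos θ) :=
    intervalIntegral.intervalIntegral_pos_of_pos_on
      ((Real.continuous_exp.comp (continuous_const.mul Real.continuous_cos)).intervalIntegrable 0 π)
      (fun x _ => Real.exp_pos _) Real.pi_pos
  have h2 := Real.pi_pos
  positivity

noncomputable def psi (σ : ℝ) (u : ℝ) : ℝ :=
  Real.exp (-u / (2 * σ ^ 2)) / (Real.sqrt (2 * π) * σ * Real.sqrt u)

lemma psi_nonneg (σ : ℝ) (hσ : 0 < σ) (u : ℝ) : 0 ≤ psi σ u := by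
  unfold psi
  have := Real.pi_pos
  positivity

lemma psi_meas (σ : ℝ) : Measurable (psi σ) := by
  unfold psi
  fun_prop

lemma key_int (σ : ℝ) (hσ : 0 < σ) (h : ℝ → ℝ) (hm : Measurable h) (C : ℝ)
    (hb : ∀ x, |h x| ≤ C) :
    IntegrableOn (fun u => h u * psi σ u) (Set.Ioi (0:ℝ)) := by
  rw [show (fun u => h u * psi σ u) = (fun u => h u * (Real.exp (-u / (2 * σ ^ 2)) /
      (Real.sqrt (2 * π) * σ * Real.sqrt u))) from rfl, key_subst_int]
  have hC : 0 ≤ C := le_trans (abs_nonneg _) (hb 0)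
  have hmeas : Measurable fun x : ℝ => |2 * x| • (h (x ^ 2) *
      (Real.exp (-(x^2) / (2 * σ ^ 2)) / (Real.sqrt (2 * π) * σ * Real.sqrt (x^2)))) := by
    fun_prop
  refine Integrable.mono' (g := fun x => (2 * C) * gaussianPDFReal 0 ⟨σ^2, sq_nonneg σ⟩ x)
    (((integrable_gaussianPDFReal 0 ⟨σ^2, sq_nonneg σ⟩).const_mul (2*C)).restrict)
    hmeas.aestronglyMeasurable ?_
  filter_upwards [ae_restrict_mem measurableSet_Ioi] with x hx
  have hx0 : (0:ℝ) < x := hx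
  have hs : Real.sqrt (x ^ 2) = x := Real.sqrt_sq hx0.le
  have h2π : Real.sqrt (2 * π * (σ ^ 2)) = Real.sqrt (2 * π) * σ := by
    rw [Real.sqrt_mul (by positivity), Real.sqrt_sq hσ.le]
  have hπ := Real.pi_pos
  rw [smul_eq_mul, Real.norm_eq_abs, hs, abs_mul, abs_abs,
    abs_of_pos (by linarith : (0:ℝ) < 2*x), abs_mul]
  have hcoe : NNReal.toReal (Subtype.mk (σ ^ 2) (sq_nonneg σ)) = σ ^ 2 := rfl
  simp only [gaussianPDFReal, hcoe, NNReal.coe_mk, sub_zero]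
  have hexp : Real.exp (-x ^ 2 / (2 * σ ^ 2)) = Real.exp (-(x^2) / (2 * σ ^ 2)) := by ring_nf
  rw [h2π, hexp, abs_of_nonneg (by positivity : (0:ℝ) ≤ Real.exp (-(x^2) / (2 * σ ^ 2)) / (Real.sqrt (2 * π) * σ * x))]
  have hb' := hb (x^2)
  have key : 2 * x * (Real.exp (-(x^2) / (2 * σ ^ 2)) / (Real.sqrt (2 * π) * σ * x))
      = 2 * ((Real.sqrt (2*π) * σ)⁻¹ * Real.exp (-(x^2) / (2 * σ ^ 2))) := by
    field_simp
  calc 2 * x * (|h (x ^ 2)| * (Real.exp (-(x^2) / (2 * σ ^ 2)) / (Real.sqrt (2 * π) * σ * x)))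
      = |h (x^2)| * (2 * x * (Real.exp (-(x^2) / (2 * σ ^ 2)) / (Real.sqrt (2 * π) * σ * x))) := by ring
    _ ≤ C * (2 * x * (Real.exp (-(x^2) / (2 * σ ^ 2)) / (Real.sqrt (2 * π) * σ * x))) := by
        apply mul_le_mul_of_nonneg_right hb'
        positivity
    _ = 2 * C * ((Real.sqrt (2*π) * σ)⁻¹ * Real.exp (-(x^2) / (2 * σ ^ 2))) := by
        rw [key]; ring

lemma shift (u : ℝ) (k : ℝ → ℝ) :
    ∫ v in Set.Ioi (0:ℝ), k (u + v) = ∫ r in Set.Ioi u, k r := by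
  rw [← integral_indicator measurableSet_Ioi, ← integral_indicator measurableSet_Ioi,
    ← integral_add_left_eq_self (fun r => Set.indicator (Set.Ioi u) k r) u]
  congr 1
  ext v
  by_cases hv : 0 < v <;>
    simp [Set.indicator_apply, Set.mem_Ioi, hv]

noncomputable def shear : ℝ × ℝ ≃ᵐ ℝ × ℝ where
  toFun := fun p => (p.1, p.1 + p.2)
  invFun := fun p => (p.1, p.2 - p.1)
  left_inv := fun p => by simp
  right_inv := fun p => by simp
  measurable_toFun := measurable_fst.prodMk (measurable_fst.add measurable_snd)
  measurable_invFun := measurable_fst.prodMk (measurable_snd.sub measurable_fst)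

lemma shear_mp : MeasurePreserving shear
    ((volume : Measure ℝ).prod (volume : Measure ℝ)) ((volume : Measure ℝ).prod (volume : Measure ℝ)) :=
  MeasurePreserving.skew_product (MeasurePreserving.id _)
    (measurable_fst.add measurable_snd)
    (Filter.Eventually.of_forall (fun a => map_add_left_eq_self volume a))

lemma algebra_lemma (σ₁ σ₂ : ℝ) (h1 : 0 < σ₁) (h2 : 0 < σ₂) (u r : ℝ) (hu : 0 < u) (hur : u < r) :
    psi σ₂ (r - u) * psi σ₁ u =
      (Real.exp (-(r - u) / (2 * σ₂ ^ 2) - u / (2 * σ₁ ^ 2)) /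
        (Real.sqrt u * Real.sqrt (r - u) *
          (π * Real.exp (-(r * (σ₁ ^ 2 + σ₂ ^ 2)) / (4 * σ₁ ^ 2 * σ₂ ^ 2)) *
            besselI0 (r * (σ₁ ^ 2 - σ₂ ^ 2) / (4 * σ₁ ^ 2 * σ₂ ^ 2))))) *
      ((1 / (2 * σ₁ * σ₂)) * Real.exp (-(r * (σ₁ ^ 2 + σ₂ ^ 2)) / (4 * σ₁ ^ 2 * σ₂ ^ 2)) *
        besselI0 (r * (σ₁ ^ 2 - σ₂ ^ 2) / (4 * σ₁ ^ 2 * σ₂ ^ 2))) := by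
  unfold psi
  have hπ := Real.pi_pos
  have hB : 0 < besselI0 (r * (σ₁ ^ 2 - σ₂ ^ 2) / (4 * σ₁ ^ 2 * σ₂ ^ 2)) := besselI0_pos _
  have hE : 0 < Real.exp (-(r * (σ₁ ^ 2 + σ₂ ^ 2)) / (4 * σ₁ ^ 2 * σ₂ ^ 2)) := Real.exp_pos _
  have hsu : 0 < Real.sqrt u := Real.sqrt_pos.2 hu
  have hsr : 0 < Real.sqrt (r - u) := Real.sqrt_pos.2 (by linarith)
  have h2pi : Real.sqrt (2 * π) * Real.sqrt (2 * π) = 2 * π :=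
    Real.mul_self_sqrt (by positivity)
  rw [show -(r - u) / (2 * σ₂ ^ 2) - u / (2 * σ₁ ^ 2)
      = (-(r - u) / (2 * σ₂ ^ 2)) + (-u / (2 * σ₁ ^ 2)) by ring, Real.exp_add]
  field_simp
  have h2' : Real.sqrt 2 * Real.sqrt π * (Real.sqrt 2 * Real.sqrt π) = 2 * π := by
    rw [show Real.sqrt 2 * Real.sqrt π * (Real.sqrt 2 * Real.sqrt π)
        = (Real.sqrt 2 * Real.sqrt 2) * (Real.sqrt π * Real.sqrt π) by ring,
      Real.mul_self_sqrt (by norm_num : (0:ℝ) ≤ 2), Real.mul_self_sqrt hπ.le]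
  ring_nf
  rw [Real.sq_sqrt (by positivity : (0:ℝ) ≤ π * 2), mul_assoc, mul_inv_cancel₀ (besselI0_pos _).ne']
  ring

theorem conditional_density_hoyt
    (σ₁ σ₂ : ℝ) (hσ₁ : 0 < σ₁) (hσ₂ : 0 < σ₂)
    (μ₁ μ₂ : Measure ℝ)
    (hμ₁ : μ₁ = gaussianReal 0 ⟨σ₁ ^ 2, sq_nonneg σ₁⟩)
    (hμ₂ : μ₂ = gaussianReal 0 ⟨σ₂ ^ 2, sq_nonneg σ₂⟩)
    (fR : ℝ → ℝ)
    (hfR : ∀ r : ℝ, fR r =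
      (1 / (2 * σ₁ * σ₂)) * Real.exp (-(r * (σ₁ ^ 2 + σ₂ ^ 2)) / (4 * σ₁ ^ 2 * σ₂ ^ 2)) *
        besselI0 (r * (σ₁ ^ 2 - σ₂ ^ 2) / (4 * σ₁ ^ 2 * σ₂ ^ 2)))
    (f : ℝ → ℝ → ℝ)
    (hf : ∀ x r : ℝ, f x r =
      Real.exp (-(r - x) / (2 * σ₂ ^ 2) - x / (2 * σ₁ ^ 2)) /
        (Real.sqrt x * Real.sqrt (r - x) *
          (π * Real.exp (-(r * (σ₁ ^ 2 + σ₂ ^ 2)) / (4 * σ₁ ^ 2 * σ₂ ^ 2)) *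
            besselI0 (r * (σ₁ ^ 2 - σ₂ ^ 2) / (4 * σ₁ ^ 2 * σ₂ ^ 2)))))
    (g : ℝ → ℝ) (hg : Measurable g) (hgbdd : ∃ C : ℝ, ∀ x, |g x| ≤ C)
    (A : Set ℝ) (hA : MeasurableSet A) (hAsub : A ⊆ Set.Ioi (0:ℝ)) :
    ∫ p : ℝ × ℝ, g (p.1 ^ 2) * Set.indicator A (fun _ => (1:ℝ)) (p.1 ^ 2 + p.2 ^ 2)
        ∂(μ₁.prod μ₂) =
      ∫ r in A, (∫ x in Set.Ioo 0 r, g x * f x r) * fR r := by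
  classical
  obtain ⟨C, hC⟩ := hgbdd
  have hC0 : 0 ≤ C := le_trans (abs_nonneg _) (hC 0)
  subst hμ₁ hμ₂
  haveI : IsProbabilityMeasure (gaussianReal 0 ⟨σ₁ ^ 2, sq_nonneg σ₁⟩) := instIsProbabilityMeasureGaussianReal _ _
  haveI : IsProbabilityMeasure (gaussianReal 0 ⟨σ₂ ^ 2, sq_nonneg σ₂⟩) := instIsProbabilityMeasureGaussianReal _ _
  set ind : ℝ → ℝ := Set.indicator A (fun _ => (1:ℝ)) with hind
  have ind_meas : Measurable ind := measurable_const.indicator hA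
  have ind_le : ∀ r, |ind r| ≤ 1 := by
    intro r
    rw [hind, Set.indicator_apply]
    split <;> simp
  have ind_nonneg : ∀ r, 0 ≤ ind r := by
    intro r
    rw [hind, Set.indicator_apply]
    split <;> simp
  -- Step 1: integrability on the product
  have hFmeas : Measurable fun p : ℝ × ℝ => g (p.1 ^ 2) * ind (p.1 ^ 2 + p.2 ^ 2) :=
    (hg.comp (measurable_fst.pow_const 2)).mul
      (ind_meas.comp ((measurable_fst.pow_const 2).add (measurable_snd.pow_const 2)))
  have hF_int : Integrable (fun p : ℝ × ℝ => g (p.1 ^ 2) * ind (p.1 ^ 2 + p.2 ^ 2))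
      ((gaussianReal 0 ⟨σ₁ ^ 2, sq_nonneg σ₁⟩).prod (gaussianReal 0 ⟨σ₂ ^ 2, sq_nonneg σ₂⟩)) := by
    refine (integrable_const C).mono' hFmeas.aestronglyMeasurable (ae_of_all _ fun p => ?_)
    rw [Real.norm_eq_abs, abs_mul]
    calc |g (p.1 ^ 2)| * |ind (p.1 ^ 2 + p.2 ^ 2)| ≤ C * 1 :=
          mul_le_mul (hC _) (ind_le _) (abs_nonneg _) hC0
      _ = C := mul_one C
  rw [MeasureTheory.integral_prod _ hF_int]
  -- Step 2: apply the key substitution twice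
  set Φ : ℝ → ℝ := fun u => ∫ v in Set.Ioi (0:ℝ),
    (g u * ind (u + v)) * psi σ₂ v with hΦ
  have h2 : (fun x : ℝ => ∫ y, g (x ^ 2) * ind (x ^ 2 + y ^ 2)
      ∂(gaussianReal 0 ⟨σ₂ ^ 2, sq_nonneg σ₂⟩)) = fun x => Φ (x ^ 2) :=
    funext fun x => key σ₂ hσ₂ (fun t => g (x ^ 2) * ind (x ^ 2 + t))
  rw [h2, key σ₁ hσ₁ Φ]
  -- Step 3: shift the inner integral
  set W : ℝ → ℝ → ℝ := fun u r => ind r * (g u * (psi σ₂ (r - u) * psi σ₁ u)) with hW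
  have hstep : ∀ u ∈ Set.Ioi (0:ℝ), Φ u *
      (Real.exp (-u / (2 * σ₁ ^ 2)) / (Real.sqrt (2 * π) * σ₁ * Real.sqrt u))
      = ∫ r in Set.Ioi u, W u r := by
    intro u _
    have h1 : Φ u = ∫ v in Set.Ioi (0:ℝ),
        (fun r => g u * ind r * psi σ₂ (r - u)) (u + v) := by
      rw [hΦ]
      refine setIntegral_congr_fun measurableSet_Ioi fun v _ => ?_
      simp only [add_sub_cancel_left]
    rw [h1, shift u (fun r => g u * ind r * psi σ₂ (r - u)),
      show (Real.exp (-u / (2 * σ₁ ^ 2)) / (Real.sqrt (2 * π) * σ₁ * Real.sqrt u))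
        = psi σ₁ u from rfl, ← MeasureTheory.integral_mul_const]
    refine setIntegral_congr_fun measurableSet_Ioi fun r _ => ?_
    rw [hW]
    ring
  rw [setIntegral_congr_fun measurableSet_Ioi hstep]
  -- Step 4: swap the iterated integrals
  set S : Set (ℝ × ℝ) := {q : ℝ × ℝ | 0 < q.1 ∧ q.1 < q.2} with hS
  have hS_meas : MeasurableSet S := by
    rw [hS, Set.setOf_and]
    exact (measurableSet_lt measurable_const measurable_fst).inter
      (measurableSet_lt measurable_fst measurable_snd)
  set Fp : ℝ × ℝ → ℝ := fun p => Set.indicator S (fun q => W q.1 q.2) p with hFp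
  have hW_meas : Measurable fun q : ℝ × ℝ => W q.1 q.2 := by
    rw [hW]
    exact (ind_meas.comp measurable_snd).mul ((hg.comp measurable_fst).mul
      (((psi_meas σ₂).comp (measurable_snd.sub measurable_fst)).mul
        ((psi_meas σ₁).comp measurable_fst)))
  have hFp_meas : Measurable Fp := hW_meas.indicator hS_meas
  have ha : ∫ u in Set.Ioi (0:ℝ), ∫ r in Set.Ioi u, W u r
      = ∫ u, ∫ r, Fp (u, r) := by
    rw [← integral_indicator measurableSet_Ioi]
    congr 1
    ext u
    by_cases hu : 0 < u
    · rw [Set.indicator_of_mem (show u ∈ Set.Ioi (0:ℝ) from hu),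
        ← integral_indicator measurableSet_Ioi]
      congr 1
      ext r
      by_cases hr : u < r <;>
        simp [hFp, Set.indicator_apply, hS, hu, hr]
    · rw [Set.indicator_of_notMem (show u ∉ Set.Ioi (0:ℝ) from hu)]
      symm
      rw [show (fun r => Fp (u, r)) = fun _ => (0:ℝ) from funext fun r => by
        simp [hFp, Set.indicator_apply, hS, hu]]
      exact integral_zero _ _
  rw [ha]
  -- integrability for Fubini
  have hψ₁int : Integrable ((Set.Ioi (0:ℝ)).indicator (psi σ₁)) volume := by
    rw [integrable_indicator_iff measurableSet_Ioi]
    have := key_int σ₁ hσ₁ (fun _ => 1) measurable_const 1 (by simp)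
    simpa only [one_mul] using this
  have hψ₂int : Integrable ((Set.Ioi (0:ℝ)).indicator (psi σ₂)) volume := by
    rw [integrable_indicator_iff measurableSet_Ioi]
    have := key_int σ₂ hσ₂ (fun _ => 1) measurable_const 1 (by simp)
    simpa only [one_mul] using this
  have hcomp : Integrable (Fp ∘ shear) ((volume : Measure ℝ).prod volume) := by
    refine ((hψ₁int.mul_prod hψ₂int).const_mul C).mono'
      ((hFp_meas.comp shear.measurable)).aestronglyMeasurable (ae_of_all _ fun p => ?_)
    have hsh : shear p = (p.1, p.1 + p.2) := rfl
    rw [Function.comp_apply, hsh]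
    by_cases h0 : 0 < p.1 ∧ 0 < p.2
    · have hmem : (p.1, p.1 + p.2) ∈ S := by
        simp only [hS, Set.mem_setOf_eq]
        exact ⟨h0.1, by linarith [h0.2]⟩
      rw [hFp]
      simp only [Set.indicator_of_mem hmem]
      rw [hW]
      simp only [add_sub_cancel_left]
      rw [Real.norm_eq_abs, abs_mul, abs_mul, abs_mul,
        abs_of_nonneg (psi_nonneg σ₂ hσ₂ _), abs_of_nonneg (psi_nonneg σ₁ hσ₁ _),
        Set.indicator_of_mem (Set.mem_Ioi.2 h0.1), Set.indicator_of_mem (Set.mem_Ioi.2 h0.2)]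
      have hps : 0 ≤ psi σ₂ p.2 * psi σ₁ p.1 :=
        mul_nonneg (psi_nonneg σ₂ hσ₂ _) (psi_nonneg σ₁ hσ₁ _)
      calc |ind (p.1 + p.2)| * (|g p.1| * (psi σ₂ p.2 * psi σ₁ p.1))
          ≤ 1 * (C * (psi σ₂ p.2 * psi σ₁ p.1)) :=
            mul_le_mul (ind_le _) (mul_le_mul_of_nonneg_right (hC _) hps)
              (mul_nonneg (abs_nonneg _) hps) zero_le_one
        _ = C * (psi σ₁ p.1 * psi σ₂ p.2) := by ring
    · simp only [hFp]
      rw [Set.indicator_of_notMem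
        (show (p.1, p.1 + p.2) ∉ S from fun hc => h0 ⟨hc.1, by
          have := hc.2; simp only at this; linarith⟩)]
      simp only [norm_zero]
      have h1 : 0 ≤ (Set.Ioi (0:ℝ)).indicator (psi σ₁) p.1 :=
        Set.indicator_nonneg (fun x _ => psi_nonneg σ₁ hσ₁ x) _
      have h2' : 0 ≤ (Set.Ioi (0:ℝ)).indicator (psi σ₂) p.2 :=
        Set.indicator_nonneg (fun x _ => psi_nonneg σ₂ hσ₂ x) _
      exact mul_nonneg hC0 (mul_nonneg h1 h2')
  have hFp_int : Integrable Fp ((volume : Measure ℝ).prod volume) :=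
    (shear_mp.integrable_comp_emb shear.measurableEmbedding).1 hcomp
  have hswap : ∫ u, ∫ r, Fp (u, r) = ∫ r, ∫ u, Fp (u, r) :=
    integral_integral_swap (f := fun u r => Fp (u, r)) hFp_int
  rw [hswap]
  -- Step 5: evaluate slices in the other order
  have hd : (fun r => ∫ u, Fp (u, r))
      = fun r => Set.indicator A
          (fun r' => ∫ u in Set.Ioo (0:ℝ) r', g u * (psi σ₂ (r' - u) * psi σ₁ u)) r := by
    ext r
    have hslice : (fun u => Fp (u, r)) = (Set.Ioo (0:ℝ) r).indicator (fun u => W u r) := by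
      ext u
      by_cases hu : 0 < u ∧ u < r <;>
        simp [hFp, Set.indicator_apply, hS, Set.mem_Ioo, hu]
    rw [hslice, integral_indicator measurableSet_Ioo]
    by_cases hr : r ∈ A
    · rw [Set.indicator_of_mem hr]
      rw [show (fun u => W u r) = fun u => ind r * (g u * (psi σ₂ (r - u) * psi σ₁ u)) from rfl,
        MeasureTheory.integral_const_mul, hind, Set.indicator_of_mem hr, one_mul]
    · rw [Set.indicator_of_notMem hr]
      rw [show (fun u => W u r) = fun u => ind r * (g u * (psi σ₂ (r - u) * psi σ₁ u)) from rfl,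
        MeasureTheory.integral_const_mul, hind, Set.indicator_of_notMem hr, zero_mul]
  rw [hd, integral_indicator hA]
  -- Step 6: pointwise algebra on A
  refine setIntegral_congr_fun hA fun r hr => ?_
  rw [← MeasureTheory.integral_mul_const]
  refine setIntegral_congr_fun measurableSet_Ioo fun u hu => ?_
  rw [hf, hfR, mul_assoc]
  congr 1
  exact algebra_lemma σ₁ σ₂ hσ₁ hσ₂ u r hu.1 hu.2
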